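/- Let E be a directed graph, let α = e_1⋯e_n be a closed path in E with vertex set α^0 = {s(e_1), …, s(e_n)}, and let D := {r(f) : f is an exit of α}. Suppose there is no path from any vertex of D to a vertex of α^0. Then the hereditary saturated closure X := \overline{D} satisfies X ∩ α^0 = ∅, and every exit f of α has r(f) ∈ X; consequently, in the restricted graph with vertices E^0 \ X and edges {e ∈ E^1 : r(e) ∉ X}, α is a closed path with no exit. -/

import Mathlib

/-- A directed graph `E = (E⁰, E¹, r, s)`: `V` is the vertex set `E⁰`, `Edg` is the
edge set `E¹`, and `s`, `r` give the source and range of each edge. -/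
structure DGraph (V : Type*) (Edg : Type*) where
  s : Edg → V
  r : Edg → V

namespace DGraph

variable {V Edg : Type*}

/-- There is an edge from `v` to `w`. -/
def Adj (G : DGraph V Edg) (v w : V) : Prop := ∃ e, G.s e = v ∧ G.r e = w

/-- There is a path (possibly of length zero, i.e. a vertex) from `v` to `w`. -/
def Reaches (G : DGraph V Edg) : V → V → Prop := Relation.ReflTransGen G.Adj

/-- A subset `X ⊆ E⁰` is hereditary if `r(e) ∈ X` whenever `s(e) ∈ X`. -/
def Hereditary (G : DGraph V Edg) (X : Set V) : Prop := ∀ e, G.s e ∈ X → G.r e ∈ X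

/-- A vertex is a finite emitter if `s⁻¹(v)` is finite and nonempty. -/
def FiniteEmitter (G : DGraph V Edg) (v : V) : Prop :=
  {e | G.s e = v}.Finite ∧ {e | G.s e = v}.Nonempty

/-- A subset `X ⊆ E⁰` is saturated if every finite emitter `v` with
`r(s⁻¹(v)) ⊆ X` lies in `X`. -/
def Saturated (G : DGraph V Edg) (X : Set V) : Prop :=
  ∀ v, FiniteEmitter G v → (∀ e, G.s e = v → G.r e ∈ X) → v ∈ X

/-- The hereditary saturated closure of `X`: the smallest hereditary and saturated
subset of `E⁰` containing `X`. -/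
def satClosure (G : DGraph V Edg) (X : Set V) : Set V :=
  ⋂₀ {Y | Hereditary G Y ∧ Saturated G Y ∧ X ⊆ Y}

/-- The consecutive edges of a path match up: `r(eᵢ) = s(eᵢ₊₁)`. -/
def IsChain (G : DGraph V Edg) (p : List Edg) : Prop :=
  List.Chain' (fun e f => G.r e = G.s f) p

/-- `p` is a closed path (of length ≥ 1) based at `v`. -/
def IsClosedPathAt (G : DGraph V Edg) (p : List Edg) (v : V) : Prop :=
  ∃ hne : p ≠ [], IsChain G p ∧ G.s (p.head hne) = v ∧ G.r (p.getLast hne) = v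

/-- `p` is a closed path (of length ≥ 1). -/
def IsClosedPath (G : DGraph V Edg) (p : List Edg) : Prop := ∃ v, IsClosedPathAt G p v

/-- The vertex set `α⁰ = {s(e₁), …, s(eₙ)}` of a path. -/
def pathVerts (G : DGraph V Edg) (p : List Edg) : Set V := {w | ∃ e ∈ p, G.s e = w}

/-- An exit of a closed path `e₁⋯eₙ` is an edge `f` with `s(f) = s(eᵢ)` and
`f ≠ eᵢ` for some `i`. -/
def IsExitOf (G : DGraph V Edg) (f : Edg) (p : List Edg) : Prop :=
  ∃ e ∈ p, G.s f = G.s e ∧ f ≠ e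

/-- `p` is a simple closed path based at `v`: a closed path whose sources are
pairwise distinct. -/
def IsSimpleClosedPathAt (G : DGraph V Edg) (p : List Edg) (v : V) : Prop :=
  IsClosedPathAt G p v ∧ (p.map G.s).Nodup

end DGraph

lemma chain'_last_or_rel {A : Type*} {R : A → A → Prop} :
    ∀ {p : List A}, List.Chain' R p → ∀ e ∈ p,
      (∃ h : p ≠ [], e = p.getLast h) ∨ ∃ f ∈ p, R e f
  | [], _, e, he => absurd he List.not_mem_nil
  | [a], _, e, he => by
      simp only [List.mem_singleton] at he; subst he
      exact Or.inl ⟨by simp, by simp⟩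
  | a :: b :: t, hc, e, he => by
      rw [List.Chain', List.isChain_cons_cons] at hc
      rcases List.mem_cons.mp he with rfl | he'
      · exact Or.inr ⟨b, by simp, hc.1⟩
      · rcases chain'_last_or_rel hc.2 e he' with ⟨h, rfl⟩ | ⟨f, hf, hR⟩
        · exact Or.inl ⟨by simp, (List.getLast_cons (by simp)).symm⟩
        · exact Or.inr ⟨f, List.mem_cons_of_mem _ hf, hR⟩

/-- let `α` be a closed path, let `D = {r(f) : f an exit of α}`, and
suppose there is no path from any vertex of `D` to a vertex of `α⁰`. Then the
hereditary saturated closure `X` of `D` is disjoint from `α⁰`, every exit `f` of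
`α` has `r(f) ∈ X`; consequently in the restricted graph with vertices `E⁰ \ X`
and edges `{e : r(e) ∉ X}`, `α` is a closed path (all its edges survive) with no
exit. -/
theorem stmt17 {V Edg : Type*} (G : DGraph V Edg) (α : List Edg) (v : V)
    (hα : G.IsClosedPathAt α v)
    (hD : ∀ w ∈ {w | ∃ f, G.IsExitOf f α ∧ G.r f = w},
      ∀ u ∈ G.pathVerts α, ¬ G.Reaches w u) :
    G.satClosure {w | ∃ f, G.IsExitOf f α ∧ G.r f = w} ∩ G.pathVerts α = ∅ ∧
    (∀ f, G.IsExitOf f α → G.r f ∈ G.satClosure {w | ∃ f, G.IsExitOf f α ∧ G.r f = w}) ∧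
    (∀ e ∈ α, G.r e ∉ G.satClosure {w | ∃ f, G.IsExitOf f α ∧ G.r f = w}) ∧
    (∀ f, G.r f ∉ G.satClosure {w | ∃ f, G.IsExitOf f α ∧ G.r f = w} →
      ¬ G.IsExitOf f α) := by
  obtain ⟨hne, hchain, hhead, hlast⟩ := hα
  set D : Set V := {w | ∃ f, G.IsExitOf f α ∧ G.r f = w} with hDdef
  set Y : Set V := {w | ∀ u ∈ G.pathVerts α, ¬ G.Reaches w u} with hYdef
  -- ranges of path edges are path vertices
  have hrange : ∀ e ∈ α, G.r e ∈ G.pathVerts α := by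
    intro e he
    rcases chain'_last_or_rel hchain e he with ⟨h, rfl⟩ | ⟨f, hf, hR⟩
    · exact ⟨α.head hne, List.head_mem hne, by rw [hhead, hlast]⟩
    · exact ⟨f, hf, hR.symm⟩
  have hYdisj : ∀ u ∈ G.pathVerts α, u ∉ Y := by
    intro u hu hY
    exact hY u hu Relation.ReflTransGen.refl
  have hYher : G.Hereditary Y := by
    intro e hs u hu hreach
    exact hs u hu (Relation.ReflTransGen.head ⟨e, rfl, rfl⟩ hreach)
  have hYsat : G.Saturated Y := by
    intro w hw hall u hu hreach
    rcases Relation.ReflTransGen.cases_head hreach with rfl | ⟨c, ⟨e, hse, hre⟩, hcu⟩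
    · obtain ⟨e, he, hse⟩ := hu
      exact hYdisj _ (hrange e he) (hall e hse)
    · exact (hre ▸ hall e hse) u hu hcu
  have hDY : D ⊆ Y := fun w hw u hu => hD w hw u hu
  have hXY : G.satClosure D ⊆ Y := fun w hw => hw Y ⟨hYher, hYsat, hDY⟩
  have hDX : D ⊆ G.satClosure D := fun w hw Z hZ => hZ.2.2 hw
  refine ⟨?_, ?_, ?_, ?_⟩
  · ext u
    simp only [Set.mem_inter_iff, Set.mem_empty_iff_false, iff_false, not_and]
    intro hX hu
    exact hYdisj u hu (hXY hX)
  · intro f hf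
    exact hDX ⟨f, hf, rfl⟩
  · intro e he hX
    exact hYdisj _ (hrange e he) (hXY hX)
  · intro f hX hf
    exact hX (hDX ⟨f, hf, rfl⟩)
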